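/- In the maximum-matching construction the following hold: (a) every facility i ∈ I_H is saturated, i.e., Σ_{j∈D} z_{ij} = U_i; (b) if i ∈ I \ I_H and j ∈ D_H, then z_{ij} = 2x*_{ij}; (c) if i ∈ I_H and j ∈ D \ D_H, then z_{ij} = 0. -/

import Mathlib

/-!
Formalization of statements from "An LP-rounding approach to capacitated facility location".

`F` is the (finite) type of facilities, `D` the type of clients, `U i` the (positive integer)
capacity of facility `i`.  The multi-commodity flow network `MFN(g, x, y)` has nodes
`j^s, j^t` for clients `j` and `i, i'` for facilities `i`; its arcs and capacities are as in
`MFNArc` / `mfnCap` below.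
-/

open scoped BigOperators Classical

/-- Arcs of the multi-commodity flow network `MFN`:
`mid i` is the arc `(i, i')`, `sx j i` is `(j^s, i)`, `gs i j` is `(i, j^s)`,
and `ft i j` is `(i', j^t)`. -/
inductive MFNArc (F D : Type) where
  | mid : F → MFNArc F D
  | sx  : D → F → MFNArc F D
  | gs  : F → D → MFNArc F D
  | ft  : F → D → MFNArc F D
  deriving DecidableEq, Fintype

/-- Nodes of the multi-commodity flow network `MFN`. -/
inductive MFNNode (F D : Type) where
  | src  : D → MFNNode F D
  | fac  : F → MFNNode F D
  | fac' : F → MFNNode F D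
  | sink : D → MFNNode F D
  deriving DecidableEq

variable {F D : Type}

/-- Tail (start node) of an arc. -/
def MFNArc.tail : MFNArc F D → MFNNode F D
  | .mid i => .fac i
  | .sx j _ => .src j
  | .gs i _ => .fac i
  | .ft i _ => .fac' i

/-- Head (end node) of an arc. -/
def MFNArc.head : MFNArc F D → MFNNode F D
  | .mid i => .fac' i
  | .sx _ i => .fac i
  | .gs _ j => .src j
  | .ft _ j => .sink j

variable [Fintype F] [Fintype D]

/-- Capacity of each arc of `MFN(g, x, y)`; the demand of client `j` is
`d j = 1 - ∑ i, g i j`. -/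
noncomputable def mfnCap (U : F → ℕ) (g x : F → D → ℝ) (y : F → ℝ) : MFNArc F D → ℝ
  | .mid i  => y i * ((U i : ℝ) - ∑ j, g i j)
  | .sx j i => x i j
  | .gs i j => g i j
  | .ft i j => y i * (1 - ∑ i', g i' j)

/-- Net outflow of a (single-commodity) flow `f` at node `v`. -/
noncomputable def netOutflow (f : MFNArc F D → ℝ) (v : MFNNode F D) : ℝ :=
  ∑ a ∈ Finset.univ.filter (fun a : MFNArc F D => a.tail = v), f a -
    ∑ a ∈ Finset.univ.filter (fun a : MFNArc F D => a.head = v), f a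

/-- `f = (f_j)_{j ∈ D}` is a feasible multi-commodity flow for `MFN(g, x, y)`:
each `f_j` is nonnegative, conserves flow at every node other than `j^s` and `j^t`,
has net outflow `d j = 1 - ∑ i, g i j` at `j^s`, and the total flow on every arc is
at most its capacity. -/
def IsFeasibleFlow (U : F → ℕ) (g x : F → D → ℝ) (y : F → ℝ)
    (f : D → MFNArc F D → ℝ) : Prop :=
  (∀ j a, 0 ≤ f j a) ∧
  (∀ (j : D) (v : MFNNode F D), v ≠ MFNNode.src j → v ≠ MFNNode.sink j →
      netOutflow (f j) v = 0) ∧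
  (∀ j : D, netOutflow (f j) (MFNNode.src j) = 1 - ∑ i, g i j) ∧
  (∀ a : MFNArc F D, ∑ j, f j a ≤ mfnCap U g x y a)

/-- The multi-commodity flow network `MFN(g, x, y)` is feasible. -/
def MFNFeasible (U : F → ℕ) (g x : F → D → ℝ) (y : F → ℝ) : Prop :=
  ∃ f : D → MFNArc F D → ℝ, IsFeasibleFlow U g x y f

/-- `g` is a valid partial (fractional) assignment of clients to facilities. -/
def ValidAssign (U : F → ℕ) (g : F → D → ℝ) : Prop :=
  (∀ i j, 0 ≤ g i j) ∧ (∀ j, ∑ i, g i j ≤ 1) ∧ (∀ i, ∑ j, g i j ≤ (U i : ℝ))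

/-- Arcs of the residual graph `H` of the fractional `b`-matching `z`: an arc from client
`j` to facility `i ∈ I` when `z i j < 2 * x i j`, and an arc from facility `i ∈ I` to
client `j` when `z i j > 0`. -/
def HStep (I : Finset F) (z x : F → D → ℝ) : F ⊕ D → F ⊕ D → Prop
  | Sum.inr j, Sum.inl i => i ∈ I ∧ z i j < 2 * x i j
  | Sum.inl i, Sum.inr j => i ∈ I ∧ 0 < z i j
  | _, _ => False

/-- Client `j` is unsaturated by the fractional matching `z`. -/
def Unsat (I : Finset F) (z : F → D → ℝ) (j : D) : Prop :=
  ∑ i ∈ I, z i j ≠ 1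

/-- Facility `i` belongs to `I_H`: it is reachable in `H` from some unsaturated client. -/
def InIH (I : Finset F) (z x : F → D → ℝ) (i : F) : Prop :=
  ∃ k : D, Unsat I z k ∧ Relation.ReflTransGen (HStep I z x) (Sum.inr k) (Sum.inl i)

/-- Client `j` belongs to `D_H`: it is reachable in `H` from some unsaturated client
(every unsaturated client itself belongs to `D_H`). -/
def InDH (I : Finset F) (z x : F → D → ℝ) (j : D) : Prop :=
  ∃ k : D, Unsat I z k ∧ Relation.ReflTransGen (HStep I z x) (Sum.inr k) (Sum.inr j)

lemma hstep_inl_mem {I : Finset F} {z x : F → D → ℝ} {v : F ⊕ D} {i : F}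
    (h : HStep I z x v (Sum.inl i)) : i ∈ I := by
  cases v with
  | inl a => exact h.elim
  | inr j => exact h.1

lemma sum_pair_row (i : F) (j : D) (ε : ℝ) (a : F) :
    ∑ b : D, (if a = i ∧ b = j then ε else 0) = if a = i then ε else 0 := by
  by_cases h : a = i <;> simp [h]

lemma sum_pair_col (I : Finset F) {i : F} (hi : i ∈ I) (j : D) (ε : ℝ) (b : D) :
    ∑ a ∈ I, (if a = i ∧ b = j then ε else 0) = if b = j then ε else 0 := by
  by_cases h : b = j <;> simp [h, hi]

/-- Augmenting path lemma: if there is a path in `H` from an unsaturated client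
to a facility with residual capacity, then `z` is not maximum. -/
lemma aug_aux (U : F → ℕ) (x : F → D → ℝ) (I : Finset F) :
    ∀ n : ℕ, ∀ l : List (F ⊕ D), l.length ≤ n →
    ∀ z : F → D → ℝ,
    (∀ a b, 0 ≤ z a b) → (∀ a ∈ I, ∀ b, z a b ≤ 2 * x a b) →
    (∀ b, ∑ a ∈ I, z a b ≤ 1) → (∀ a ∈ I, ∑ b, z a b ≤ (U a : ℝ)) →
    ∀ i : F, i ∈ I → ∑ b, z i b < (U i : ℝ) →
    List.Chain (flip (HStep I z x)) (Sum.inl i) l →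
    ∀ k : D, List.getLast (Sum.inl i :: l) (List.cons_ne_nil _ _) = Sum.inr k →
    Unsat I z k →
    ∃ z' : F → D → ℝ, (∀ a b, 0 ≤ z' a b) ∧ (∀ a ∈ I, ∀ b, z' a b ≤ 2 * x a b) ∧
      (∀ b, ∑ a ∈ I, z' a b ≤ 1) ∧ (∀ a ∈ I, ∑ b, z' a b ≤ (U a : ℝ)) ∧
      ∑ a ∈ I, ∑ b, z a b < ∑ a ∈ I, ∑ b, z' a b := by
  intro n
  induction n with
  | zero =>
    intro l hl z _ _ _ _ i _ _ _ k hlast _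
    have hnil : l = [] := List.length_eq_zero_iff.mp (Nat.le_zero.mp hl)
    subst hnil
    simp at hlast
  | succ n ih =>
    intro l hl z hz0 hzx hz1 hzU i hiI hslack hchain k hlast hk
    cases l with
    | nil => simp at hlast
    | cons v rest =>
      unfold List.Chain at hchain
      rw [List.chain_cons] at hchain
      obtain ⟨hstep1, hchain⟩ := hchain
      cases v with
      | inl a => exact hstep1.elim
      | inr j =>
        obtain ⟨_, hlt⟩ : i ∈ I ∧ z i j < 2 * x i j := hstep1
        by_cases hj : Unsat I z j
        · -- direct augmentation along the single edge (j, i)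
          have hcol : ∑ a ∈ I, z a j < 1 := lt_of_le_of_ne (hz1 j) hj
          set ε : ℝ := min (2 * x i j - z i j) (min (1 - ∑ a ∈ I, z a j) ((U i : ℝ) - ∑ b, z i b)) with hε
          have hε0 : 0 < ε := by
            apply lt_min (by linarith) (lt_min (by linarith) (by linarith))
          have hε1 : ε ≤ 2 * x i j - z i j := min_le_left _ _
          have hε2 : ε ≤ 1 - ∑ a ∈ I, z a j := le_trans (min_le_right _ _) (min_le_left _ _)
          have hε3 : ε ≤ (U i : ℝ) - ∑ b, z i b := le_trans (min_le_right _ _) (min_le_right _ _)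
          refine ⟨fun a b => z a b + (if a = i ∧ b = j then ε else 0), ?_, ?_, ?_, ?_, ?_⟩
          · intro a b
            dsimp only
            have := hz0 a b
            by_cases h : a = i ∧ b = j
            · rw [if_pos h]; linarith
            · rw [if_neg h]; linarith
          · intro a ha b
            dsimp only
            by_cases h : a = i ∧ b = j
            · obtain ⟨e1, e2⟩ := h
              rw [if_pos ⟨e1, e2⟩, e1, e2]; linarith
            · have := hzx a ha b; rw [if_neg h]; linarith
          · intro b
            dsimp only
            rw [Finset.sum_add_distrib, sum_pair_col I hiI]
            by_cases h : b = j
            · rw [if_pos h, h]; linarith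
            · have := hz1 b; rw [if_neg h]; linarith
          · intro a ha
            dsimp only
            rw [Finset.sum_add_distrib, sum_pair_row]
            by_cases h : a = i
            · rw [if_pos h, h]; linarith
            · have := hzU a ha; rw [if_neg h]; linarith
          · dsimp only
            have : ∀ a ∈ I, ∑ b, (z a b + (if a = i ∧ b = j then ε else 0))
                = ∑ b, z a b + (if a = i then ε else 0) := by
              intro a _
              rw [Finset.sum_add_distrib, sum_pair_row]
            rw [Finset.sum_congr rfl this, Finset.sum_add_distrib]
            simp [hiI]
            linarith
        · -- j is saturated; peel the next edge of the path
          cases rest with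
          | nil =>
            simp at hlast
            exact absurd (hlast ▸ hk) hj
          | cons w rest' =>
            rw [List.chain_cons] at hchain
            obtain ⟨hstep2, hchain⟩ := hchain
            cases w with
            | inr b => exact hstep2.elim
            | inl i' =>
              obtain ⟨hi'I, hpos⟩ : i' ∈ I ∧ 0 < z i' j := hstep2
              have hlast' : List.getLast (Sum.inl i' :: rest') (List.cons_ne_nil _ _) = Sum.inr k := by
                rw [List.getLast_cons (List.cons_ne_nil _ _),
                  List.getLast_cons (List.cons_ne_nil _ _)] at hlast
                exact hlast
              have hlen : rest'.length ≤ n := by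
                simp at hl; omega
              by_cases hii : i' = i
              · subst hii
                exact ih rest' hlen z hz0 hzx hz1 hzU i' hiI hslack hchain k hlast' hk
              · -- shift ε of matching from edge (i', j) to edge (i, j)
                set ε : ℝ := min (2 * x i j - z i j) (min (z i' j) ((U i : ℝ) - ∑ b, z i b)) / 2 with hε
                have hεlt1 : ε < 2 * x i j - z i j := by
                  have h1 : min (2 * x i j - z i j) (min (z i' j) ((U i : ℝ) - ∑ b, z i b)) ≤ 2 * x i j - z i j := min_le_left _ _
                  have h0 : 0 < min (2 * x i j - z i j) (min (z i' j) ((U i : ℝ) - ∑ b, z i b)) :=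
                    lt_min (by linarith) (lt_min hpos (by linarith))
                  rw [hε]; linarith
                have hεlt2 : ε < z i' j := by
                  have h1 : min (2 * x i j - z i j) (min (z i' j) ((U i : ℝ) - ∑ b, z i b)) ≤ z i' j :=
                    le_trans (min_le_right _ _) (min_le_left _ _)
                  have h0 : 0 < min (2 * x i j - z i j) (min (z i' j) ((U i : ℝ) - ∑ b, z i b)) :=
                    lt_min (by linarith) (lt_min hpos (by linarith))
                  rw [hε]; linarith
                have hεlt3 : ε ≤ (U i : ℝ) - ∑ b, z i b := by
                  have h1 : min (2 * x i j - z i j) (min (z i' j) ((U i : ℝ) - ∑ b, z i b)) ≤ (U i : ℝ) - ∑ b, z i b :=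
                    le_trans (min_le_right _ _) (min_le_right _ _)
                  have h0 : 0 < min (2 * x i j - z i j) (min (z i' j) ((U i : ℝ) - ∑ b, z i b)) :=
                    lt_min (by linarith) (lt_min hpos (by linarith))
                  rw [hε]; linarith
                have hε0 : 0 < ε := by
                  have h0 : 0 < min (2 * x i j - z i j) (min (z i' j) ((U i : ℝ) - ∑ b, z i b)) :=
                    lt_min (by linarith) (lt_min hpos (by linarith))
                  rw [hε]; linarith
                set z₁ : F → D → ℝ := fun a b =>
                  z a b + (if a = i ∧ b = j then ε else 0) - (if a = i' ∧ b = j then ε else 0) with hz₁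
                -- pointwise description
                have hii2 : ¬ i = i' := fun h => hii h.symm
                have hz₁ij : z₁ i j = z i j + ε := by simp [hz₁, hii2]
                have hz₁i'j : z₁ i' j = z i' j - ε := by simp [hz₁, hii]
                have hz₁other : ∀ a b, ¬(a = i ∧ b = j) → ¬(a = i' ∧ b = j) → z₁ a b = z a b := by
                  intro a b h1 h2; simp [hz₁, h1, h2]
                have hrow : ∀ a, ∑ b, z₁ a b
                    = ∑ b, z a b + (if a = i then ε else 0) - (if a = i' then ε else 0) := by
                  intro a
                  rw [hz₁]
                  rw [Finset.sum_sub_distrib, Finset.sum_add_distrib, sum_pair_row, sum_pair_row]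
                have hcol : ∀ b, ∑ a ∈ I, z₁ a b = ∑ a ∈ I, z a b := by
                  intro b
                  rw [hz₁]
                  rw [Finset.sum_sub_distrib, Finset.sum_add_distrib,
                    sum_pair_col I hiI, sum_pair_col I hi'I]
                  ring
                -- z₁ is feasible
                have h0' : ∀ a b, 0 ≤ z₁ a b := by
                  intro a b
                  by_cases h1 : a = i ∧ b = j
                  · obtain ⟨e1, e2⟩ := h1; rw [e1, e2, hz₁ij]
                    have := hz0 i j; linarith
                  · by_cases h2 : a = i' ∧ b = j
                    · obtain ⟨e1, e2⟩ := h2; rw [e1, e2, hz₁i'j]; linarith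
                    · rw [hz₁other a b h1 h2]; exact hz0 a b
                have hx' : ∀ a ∈ I, ∀ b, z₁ a b ≤ 2 * x a b := by
                  intro a ha b
                  by_cases h1 : a = i ∧ b = j
                  · obtain ⟨e1, e2⟩ := h1; rw [e1, e2, hz₁ij]; linarith
                  · by_cases h2 : a = i' ∧ b = j
                    · obtain ⟨e1, e2⟩ := h2; rw [e1, e2, hz₁i'j]
                      have := hzx i' hi'I j; linarith
                    · rw [hz₁other a b h1 h2]; exact hzx a ha b
                have h1' : ∀ b, ∑ a ∈ I, z₁ a b ≤ 1 := by
                  intro b; rw [hcol]; exact hz1 b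
                have hU' : ∀ a ∈ I, ∑ b, z₁ a b ≤ (U a : ℝ) := by
                  intro a ha
                  rw [hrow]
                  by_cases h1 : a = i
                  · rw [h1, if_pos rfl, if_neg hii2]
                    have := hzU i hiI; linarith
                  · by_cases h2 : a = i'
                    · rw [h2, if_neg hii, if_pos rfl]
                      have := hzU i' hi'I; linarith
                    · rw [if_neg h1, if_neg h2]
                      have := hzU a ha; linarith
                -- H is monotone under the shift
                have hmono : ∀ p q, HStep I z x p q → HStep I z₁ x p q := by
                  intro p q h
                  match p, q with
                  | Sum.inr b, Sum.inl a =>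
                    obtain ⟨haI, hab⟩ : a ∈ I ∧ z a b < 2 * x a b := h
                    refine ⟨haI, ?_⟩
                    by_cases h1 : a = i ∧ b = j
                    · obtain ⟨e1, e2⟩ := h1
                      rw [e1, e2] at hab ⊢; rw [hz₁ij]; linarith
                    · by_cases h2 : a = i' ∧ b = j
                      · obtain ⟨e1, e2⟩ := h2
                        rw [e1, e2] at hab ⊢; rw [hz₁i'j]; linarith
                      · rw [hz₁other a b h1 h2]; exact hab
                  | Sum.inl a, Sum.inr b =>
                    obtain ⟨haI, hab⟩ : a ∈ I ∧ 0 < z a b := h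
                    refine ⟨haI, ?_⟩
                    by_cases h1 : a = i ∧ b = j
                    · obtain ⟨e1, e2⟩ := h1
                      rw [e1, e2] at hab ⊢; rw [hz₁ij]
                      have := hz0 i j; linarith
                    · by_cases h2 : a = i' ∧ b = j
                      · obtain ⟨e1, e2⟩ := h2
                        rw [e1, e2] at hab ⊢; rw [hz₁i'j]; linarith
                      · rw [hz₁other a b h1 h2]; exact hab
                have hchain' : List.Chain (flip (HStep I z₁ x)) (Sum.inl i') rest' :=
                  List.Chain.imp (fun p q h => hmono q p h) hchain
                have hslack' : ∑ b, z₁ i' b < (U i' : ℝ) := by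
                  rw [hrow, if_neg hii, if_pos rfl]
                  have := hzU i' hi'I; linarith
                have hk' : Unsat I z₁ k := by
                  unfold Unsat
                  rw [hcol]; exact hk
                obtain ⟨z', c0, cx, c1, cU, cgt⟩ :=
                  ih rest' hlen z₁ h0' hx' h1' hU' i' hi'I hslack' hchain' k hlast' hk'
                refine ⟨z', c0, cx, c1, cU, ?_⟩
                have htot : ∑ a ∈ I, ∑ b, z₁ a b = ∑ a ∈ I, ∑ b, z a b := by
                  rw [Finset.sum_congr rfl (fun a _ => hrow a)]
                  rw [Finset.sum_sub_distrib, Finset.sum_add_distrib]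
                  simp [hiI, hi'I]
                linarith
/-- Properties of the maximum fractional `b`-matching `z` and its
residual graph `H`: (a) every facility in `I_H` is saturated; (b) arcs between
`I \ I_H` and `D_H` are saturated at `2 x*`; (c) arcs between `I_H` and `D \ D_H`
carry no matching value. -/
theorem stmt_8
    (U : F → ℕ) (hU : ∀ i, 0 < U i)
    (xstar : F → D → ℝ) (ystar : F → ℝ)
    (hxs : ∀ i j, 0 ≤ xstar i j ∧ xstar i j ≤ 1)
    (hys : ∀ i, 0 ≤ ystar i ∧ ystar i ≤ 1)
    (y' : F → ℝ) (hy' : ∀ i, y' i = if (1 / 4 : ℝ) ≤ ystar i then 1 else ystar i)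
    (I : Finset F) (hI : ∀ i, i ∈ I ↔ y' i = 1)
    (z : F → D → ℝ)
    (hz0 : ∀ i j, 0 ≤ z i j)
    (hzx : ∀ i ∈ I, ∀ j, z i j ≤ 2 * xstar i j)
    (hzoff : ∀ i ∉ I, ∀ j, z i j = 0)
    (hz1 : ∀ j, ∑ i ∈ I, z i j ≤ 1)
    (hzU : ∀ i ∈ I, ∑ j, z i j ≤ (U i : ℝ))
    (hzmax : ∀ z' : F → D → ℝ, (∀ i j, 0 ≤ z' i j) →
      (∀ i ∈ I, ∀ j, z' i j ≤ 2 * xstar i j) →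
      (∀ j, ∑ i ∈ I, z' i j ≤ 1) → (∀ i ∈ I, ∑ j, z' i j ≤ (U i : ℝ)) →
      ∑ i ∈ I, ∑ j, z' i j ≤ ∑ i ∈ I, ∑ j, z i j)
 :
    (∀ i, InIH I z xstar i → ∑ j, z i j = (U i : ℝ)) ∧
    (∀ i ∈ I, ¬ InIH I z xstar i →
      ∀ j, InDH I z xstar j → z i j = 2 * xstar i j) ∧
    (∀ i, InIH I z xstar i → ∀ j, ¬ InDH I z xstar j → z i j = 0) := by
  have memI : ∀ i, InIH I z xstar i → i ∈ I := by
    intro i ⟨k, hk, hpath⟩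
    rcases Relation.ReflTransGen.cases_tail hpath with h | ⟨c, _, hstep⟩
    · exact absurd h (by simp)
    · exact hstep_inl_mem hstep
  refine ⟨?_, ?_, ?_⟩
  · -- (a)
    intro i hIH
    obtain ⟨k, hk, hpath⟩ := hIH
    have hiI : i ∈ I := memI i ⟨k, hk, hpath⟩
    by_contra hne
    have hlt : ∑ j, z i j < (U i : ℝ) := lt_of_le_of_ne (hzU i hiI) hne
    have hswap : Relation.ReflTransGen (flip (HStep I z xstar)) (Sum.inl i) (Sum.inr k) :=
      Relation.ReflTransGen.swap _ _ hpath
    obtain ⟨l, hchain, hlast⟩ := List.exists_isChain_cons_of_relationReflTransGen hswap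
    obtain ⟨z', c0, cx, c1, cU, cgt⟩ :=
      aug_aux U xstar I l.length l le_rfl z hz0 hzx hz1 hzU i hiI hlt hchain k hlast hk
    exact absurd (hzmax z' c0 cx c1 cU) (not_le.mpr cgt)
  · -- (b)
    intro i hiI hnI j hDH
    by_contra hne
    have hlt : z i j < 2 * xstar i j := lt_of_le_of_ne (hzx i hiI j) hne
    obtain ⟨k, hk, hp⟩ := hDH
    exact hnI ⟨k, hk, hp.tail ⟨hiI, hlt⟩⟩
  · -- (c)
    intro i hIH j hnDH
    by_contra hne
    have hpos : 0 < z i j := (hz0 i j).lt_of_ne (Ne.symm hne)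
    obtain ⟨k, hk, hp⟩ := hIH
    exact hnDH ⟨k, hk, hp.tail ⟨memI i ⟨k, hk, hp⟩, hpos⟩⟩
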